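/- Let β ∈ Δ. An element f ∈ E_Δ satisfies φ_β(f) = f if and only if f lies in the image of the canonical k-algebra homomorphism E_{Δ∖{β}} → E_Δ, where E_{Δ∖{β}} is the localization of k[[X_α : α ∈ Δ∖{β}]] at the powers of ∏_{α≠β} X_α and the map is induced by the inclusion of variables (every X_α is invertible in E_Δ). In other words, the fixed ring of the partial Frobenius φ_β acting on E_Δ is exactly the subring of series not involving the variable X_β. -/

import Mathlib

open Finsupp

section Aux

variable {k : Type*} [Field k] {Δ : Type*} [Fintype Δ] [DecidableEq Δ] (β : Δ)
variable (q : ℕ)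
variable (φ : MvPowerSeries Δ k →+* MvPowerSeries Δ k)

theorem aux_coeff_phi
    (hφ1 : ∀ (F : MvPowerSeries Δ k) (e : Δ →₀ ℕ),
      MvPowerSeries.coeff (R := k) (Finsupp.update e β (q * e β)) (φ F) =
        MvPowerSeries.coeff (R := k) e F)
    (F : MvPowerSeries Δ k) (e : Δ →₀ ℕ) (t : ℕ) (het : e β = q * t) :
    MvPowerSeries.coeff (R := k) e (φ F) = MvPowerSeries.coeff (R := k) (e.update β t) F := by
  have h := hφ1 F (e.update β t)
  have h2 : (e.update β t) β = t := by simp [Finsupp.coe_update]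
  rw [h2, Finsupp.update_idem, ← het, Finsupp.update_self] at h
  exact h

theorem aux_fix (hq : 2 ≤ q)
    (hφ1 : ∀ (F : MvPowerSeries Δ k) (e : Δ →₀ ℕ),
      MvPowerSeries.coeff (R := k) (Finsupp.update e β (q * e β)) (φ F) =
        MvPowerSeries.coeff (R := k) e F)
    (hφ2 : ∀ (F : MvPowerSeries Δ k) (e : Δ →₀ ℕ),
      ¬ q ∣ e β → MvPowerSeries.coeff (R := k) e (φ F) = 0)
    (F : MvPowerSeries Δ k)
    (hF : ∀ e : Δ →₀ ℕ, e β ≠ 0 → MvPowerSeries.coeff (R := k) e F = 0) :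
    φ F = F := by
  ext e
  by_cases hdvd : q ∣ e β
  · obtain ⟨t, ht⟩ := hdvd
    rw [aux_coeff_phi β q φ hφ1 F e t ht]
    rcases Nat.eq_zero_or_pos t with h0 | hpos
    · subst h0
      rw [mul_zero] at ht
      rw [← ht, Finsupp.update_self]
    · rw [hF _ (by simp [Finsupp.coe_update]; omega),
        hF e (by rw [ht]; exact Nat.mul_ne_zero (by omega) hpos.ne')]
  · rw [hφ2 F e hdvd, hF e (fun h0 => hdvd (h0 ▸ dvd_zero q))]

theorem aux_prod_monomial (s : Finset Δ) :
    (∏ α ∈ s, (MvPowerSeries.X α : MvPowerSeries Δ k)) =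
      MvPowerSeries.monomial (R := k) (∑ α ∈ s, Finsupp.single α 1) 1 := by
  classical
  induction s using Finset.induction with
  | empty => simp [MvPowerSeries.monomial_zero_one]
  | insert a s h ih =>
    rw [Finset.prod_insert h, Finset.sum_insert h, ih, MvPowerSeries.X_def,
      MvPowerSeries.monomial_mul_monomial, one_mul]

theorem aux_P_coeff (e : Δ →₀ ℕ) (he : e β ≠ 0) :
    MvPowerSeries.coeff (R := k) e
      (∏ α ∈ Finset.univ.erase β, (MvPowerSeries.X α : MvPowerSeries Δ k)) = 0 := by
  rw [aux_prod_monomial, MvPowerSeries.coeff_monomial, if_neg]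
  intro h
  apply he
  rw [h]
  rw [Finsupp.finset_sum_apply]
  apply Finset.sum_eq_zero
  intro α hα
  exact Finsupp.single_eq_of_ne (Ne.symm (Finset.ne_of_mem_erase hα))

theorem aux_phiXb (hq : 2 ≤ q)
    (hφ1 : ∀ (F : MvPowerSeries Δ k) (e : Δ →₀ ℕ),
      MvPowerSeries.coeff (R := k) (Finsupp.update e β (q * e β)) (φ F) =
        MvPowerSeries.coeff (R := k) e F)
    (hφ2 : ∀ (F : MvPowerSeries Δ k) (e : Δ →₀ ℕ),
      ¬ q ∣ e β → MvPowerSeries.coeff (R := k) e (φ F) = 0) :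
    φ (MvPowerSeries.X β : MvPowerSeries Δ k) = MvPowerSeries.X β ^ q := by
  ext e
  rw [MvPowerSeries.coeff_X_pow]
  by_cases h : e = Finsupp.single β q
  · subst h
    have hb : (Finsupp.single β q) β = q * 1 := by simp
    rw [aux_coeff_phi β q φ hφ1 _ _ 1 hb, if_pos rfl, MvPowerSeries.coeff_X, if_pos]
    ext α
    by_cases hα : α = β
    · simp [Finsupp.coe_update, hα, Finsupp.single_apply]
    · simp [Finsupp.coe_update, hα, Finsupp.single_apply, (Ne.symm hα : β ≠ α)]
  · rw [if_neg h]
    by_cases hdvd : q ∣ e β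
    · obtain ⟨t, ht⟩ := hdvd
      rw [aux_coeff_phi β q φ hφ1 _ e t ht, MvPowerSeries.coeff_X, if_neg]
      intro hupd
      apply h
      have ht1 : t = 1 := by
        have := congrArg (fun g => g β) hupd
        simpa [Finsupp.coe_update] using this
      subst ht1
      ext α
      by_cases hα : α = β
      · subst hα; simp [ht, Finsupp.single_apply]
      · have := congrArg (fun g => g α) hupd
        simpa [Finsupp.coe_update, hα, Finsupp.single_apply, Ne.symm hα] using this
    · rw [hφ2 _ e hdvd]

end Aux

section Core

variable {k : Type*} [Field k] {Δ : Type*} [Fintype Δ] [DecidableEq Δ] (β : Δ)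
variable (q : ℕ)
variable (φ : MvPowerSeries Δ k →+* MvPowerSeries Δ k)

theorem aux_core (hq : 2 ≤ q)
    (hφ1 : ∀ (F : MvPowerSeries Δ k) (e : Δ →₀ ℕ),
      MvPowerSeries.coeff (R := k) (Finsupp.update e β (q * e β)) (φ F) =
        MvPowerSeries.coeff (R := k) e F)
    (hφ2 : ∀ (F : MvPowerSeries Δ k) (e : Δ →₀ ℕ),
      ¬ q ∣ e β → MvPowerSeries.coeff (R := k) e (φ F) = 0)
    (m : ℕ) (F : MvPowerSeries Δ k)
    (hF : φ F = (MvPowerSeries.X β : MvPowerSeries Δ k) ^ ((q - 1) * m) * F) :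
    ∃ G : MvPowerSeries Δ k, (∀ e : Δ →₀ ℕ, e β ≠ 0 → MvPowerSeries.coeff (R := k) e G = 0) ∧
      F = (MvPowerSeries.X β : MvPowerSeries Δ k) ^ m * G := by
  set c := (q - 1) * m with hc
  have hqm : q * m = c + m := by
    have h1 : q - 1 + 1 = q := by omega
    calc q * m = (q - 1 + 1) * m := by rw [h1]
      _ = c + m := by rw [add_mul, one_mul]
  have key : ∀ e : Δ →₀ ℕ, MvPowerSeries.coeff (R := k) e (φ F) =
      if c ≤ e β then MvPowerSeries.coeff (R := k) (e.update β (e β - c)) F else 0 := by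
    intro e
    rw [hF, MvPowerSeries.X_pow_eq, MvPowerSeries.coeff_monomial_mul]
    by_cases hle : c ≤ e β
    · rw [if_pos (Finsupp.single_le_iff.mpr hle), if_pos hle, one_mul]
      have hix : e - Finsupp.single β c = e.update β (e β - c) := by
        ext α
        by_cases hα : α = β
        · subst hα; simp [Finsupp.tsub_apply, Finsupp.coe_update]
        · simp [Finsupp.tsub_apply, Finsupp.coe_update, hα, Finsupp.single_apply,
            (Ne.symm hα : β ≠ α)]
      rw [hix]
    · rw [if_neg (fun hh => hle (Finsupp.single_le_iff.mp hh)), if_neg hle]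
  have E2 : ∀ (e : Δ →₀ ℕ) (t : ℕ), MvPowerSeries.coeff (R := k) (e.update β t) F =
      if c ≤ q * t then MvPowerSeries.coeff (R := k) (e.update β (q * t - c)) F else 0 := by
    intro e t
    have h2 : (e.update β (q * t)) β = q * t := by simp [Finsupp.coe_update]
    have h1 := key (e.update β (q * t))
    rw [aux_coeff_phi β q φ hφ1 F _ t h2, Finsupp.update_idem, h2,
      Finsupp.update_idem] at h1
    exact h1
  have E1 : ∀ (e : Δ →₀ ℕ) (s : ℕ), ¬ q ∣ (s + c) →
      MvPowerSeries.coeff (R := k) (e.update β s) F = 0 := by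
    intro e s hnd
    have h2 : (e.update β (s + c)) β = s + c := by simp [Finsupp.coe_update]
    have h1 := key (e.update β (s + c))
    rw [hφ2 F _ (by rw [h2]; exact hnd), h2, if_pos (Nat.le_add_left c s),
      Finsupp.update_idem, Nat.add_sub_cancel] at h1
    exact h1.symm
  have claim1 : ∀ t, t < m → ∀ e : Δ →₀ ℕ,
      MvPowerSeries.coeff (R := k) (e.update β t) F = 0 := by
    intro t
    induction t using Nat.strong_induction_on with
    | _ t ih =>
      intro ht e
      have h := E2 e t
      by_cases hle : c ≤ q * t
      · rw [if_pos hle] at h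
        have hlt : q * t - c < t := by
          have h1 : (q - 1) * t < (q - 1) * m :=
            mul_lt_mul_of_pos_left ht (show (0:ℕ) < q - 1 by omega)
          have h2 : q * t = (q - 1) * t + t := by
            have hqq : q - 1 + 1 = q := by omega
            calc q * t = (q - 1 + 1) * t := by rw [hqq]
              _ = (q - 1) * t + t := by rw [add_mul, one_mul]
          omega
        rw [h]
        exact ih _ hlt (hlt.trans ht) e
      · rw [if_neg hle] at h; exact h
  have claim2 : ∀ d, d ≠ 0 → ∀ e : Δ →₀ ℕ,
      MvPowerSeries.coeff (R := k) (e.update β (m + d)) F = 0 := by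
    intro d
    induction d using Nat.strong_induction_on with
    | _ d ih =>
      intro hd e
      by_cases hdvd : q ∣ d
      · obtain ⟨d', hd'⟩ := hdvd
        have hd'pos : d' ≠ 0 := by rintro rfl; simp at hd'; omega
        have harg : q * (m + d') = q * m + q * d' := by ring
        have h := E2 e (m + d')
        rw [if_pos (by omega), show q * (m + d') - c = m + d by omega] at h
        have hd'lt : d' < d := by
          have h2 : 2 * d' ≤ q * d' := Nat.mul_le_mul_right d' (by omega)
          omega
        rw [← h]
        exact ih d' hd'lt hd'pos e
      · apply E1 e (m + d)
        intro hdd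
        apply hdvd
        rw [show m + d + c = q * m + d by omega] at hdd
        exact (Nat.dvd_add_right (Dvd.intro m rfl)).mp hdd
  refine ⟨@id (MvPowerSeries Δ k) (fun e => if e β = 0 then MvPowerSeries.coeff (R := k) (e.update β m) F else 0),
    fun e he => ?_, ?_⟩
  · rw [MvPowerSeries.coeff_apply]
    exact if_neg he
  · ext e
    rw [MvPowerSeries.X_pow_eq, MvPowerSeries.coeff_monomial_mul]
    by_cases hle : m ≤ e β
    · rw [if_pos (Finsupp.single_le_iff.mpr hle), one_mul]
      show MvPowerSeries.coeff (R := k) e F = (if (e - Finsupp.single β m) β = 0 then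
        MvPowerSeries.coeff (R := k) ((e - Finsupp.single β m).update β m) F else 0)
      have hsub : (e - Finsupp.single β m) β = e β - m := by
        simp [Finsupp.tsub_apply]
      by_cases heq : e β = m
      · rw [if_pos (by rw [hsub]; omega)]
        have hix : (e - Finsupp.single β m).update β m = e := by
          ext α
          by_cases hα : α = β
          · subst hα; simp [Finsupp.coe_update, heq]
          · simp [Finsupp.coe_update, hα, Finsupp.tsub_apply, Finsupp.single_apply,
              (Ne.symm hα : β ≠ α)]
        rw [hix]
      · rw [if_neg (by rw [hsub]; omega)]
        have h := claim2 (e β - m) (by omega) e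
        rwa [show m + (e β - m) = e β by omega, Finsupp.update_self,
          MvPowerSeries.coeff_apply] at h
    · rw [if_neg (fun hh => hle (Finsupp.single_le_iff.mp hh))]
      have h := claim1 (e β) (by omega) e
      rwa [Finsupp.update_self] at h

end Core

theorem aux_main {k : Type*} [Field k] {Δ : Type*} [Fintype Δ] [DecidableEq Δ] (β : Δ)
    (q : ℕ) (hq : 2 ≤ q)
    (φ : MvPowerSeries Δ k →+* MvPowerSeries Δ k)
    (hφ1 : ∀ (F : MvPowerSeries Δ k) (e : Δ →₀ ℕ),
      MvPowerSeries.coeff (R := k) (Finsupp.update e β (q * e β)) (φ F) =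
        MvPowerSeries.coeff (R := k) e F)
    (hφ2 : ∀ (F : MvPowerSeries Δ k) (e : Δ →₀ ℕ),
      ¬ q ∣ e β → MvPowerSeries.coeff (R := k) e (φ F) = 0)
    (S : MvPowerSeries Δ k) (hS : S = ∏ α : Δ, MvPowerSeries.X α)
    (φ' : Localization.Away S →+* Localization.Away S)
    (hφ' : ∀ F : MvPowerSeries Δ k,
      φ' (algebraMap (MvPowerSeries Δ k) (Localization.Away S) F) =
        algebraMap (MvPowerSeries Δ k) (Localization.Away S) (φ F))
    (g : Localization.Away S) :
    φ' g = g ↔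
      ∃ (G : MvPowerSeries Δ k) (n : ℕ),
        (∀ e : Δ →₀ ℕ, e β ≠ 0 → MvPowerSeries.coeff (R := k) e G = 0) ∧
        g * algebraMap (MvPowerSeries Δ k) (Localization.Away S)
              ((∏ α ∈ Finset.univ.erase β, (MvPowerSeries.X α : MvPowerSeries Δ k)) ^ n) =
          algebraMap (MvPowerSeries Δ k) (Localization.Away S) G := by
  set P : MvPowerSeries Δ k := ∏ α ∈ Finset.univ.erase β, MvPowerSeries.X α with hPdef
  set ρ := algebraMap (MvPowerSeries Δ k) (Localization.Away S) with hρdef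
  have hSP : S = MvPowerSeries.X β * P := by
    rw [hS]; exact (Finset.mul_prod_erase Finset.univ _ (Finset.mem_univ β)).symm
  have hPcoeff : MvPowerSeries.coeff (R := k) (∑ α ∈ Finset.univ.erase β, Finsupp.single α 1) P = 1 := by
    rw [hPdef, aux_prod_monomial]
    exact MvPowerSeries.coeff_monomial_same _ _
  have hPne : P ≠ 0 := fun h => one_ne_zero (α := k) (by rw [h, map_zero] at hPcoeff; exact hPcoeff.symm)
  have hXne : (MvPowerSeries.X β : MvPowerSeries Δ k) ≠ 0 := fun h =>
    one_ne_zero (α := k)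
      (by have := MvPowerSeries.coeff_index_single_self_X (R := k) β
          rw [h, map_zero] at this; exact this.symm)
  have hSne : S ≠ 0 := hSP ▸ mul_ne_zero hXne hPne
  have hinj : Function.Injective ρ :=
    IsLocalization.injective (Localization.Away S)
      (powers_le_nonZeroDivisors_of_noZeroDivisors hSne)
  have hSunit : IsUnit (ρ S) :=
    IsLocalization.map_units (Localization.Away S) (⟨S, Submonoid.mem_powers S⟩ : Submonoid.powers S)
  have hXPunit : IsUnit (ρ (MvPowerSeries.X β) * ρ P) := by
    rw [← map_mul, ← hSP]; exact hSunit
  have hXunit : IsUnit (ρ (MvPowerSeries.X β)) := isUnit_of_mul_isUnit_left hXPunit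
  have hPunit : IsUnit (ρ P) := isUnit_of_mul_isUnit_right hXPunit
  have hφP : φ P = P := aux_fix β q φ hq hφ1 hφ2 P (fun e he => aux_P_coeff β e he)
  have hφS : φ S = MvPowerSeries.X β ^ q * P := by
    rw [hSP, map_mul, aux_phiXb β q φ hq hφ1 hφ2, hφP]
  constructor
  · intro hg
    obtain ⟨⟨F, s⟩, hFs⟩ := IsLocalization.surj (M := Submonoid.powers S)
      (S := Localization.Away S) g
    obtain ⟨m, hm⟩ := s.prop
    have eq1 : g * ρ (S ^ m) = ρ F := by
      rw [show S ^ m = (s : MvPowerSeries Δ k) from hm]; exact hFs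
    have eq2 : g * ρ (φ S ^ m) = ρ (φ F) := by
      have h := congrArg φ' eq1
      rw [map_mul, hg, hφ', hφ', map_pow] at h
      exact h
    have eq3 : ρ (F * φ S ^ m) = ρ (φ F * S ^ m) := by
      rw [map_mul, map_mul, ← eq1, ← eq2]; ring
    have eq4 : F * φ S ^ m = φ F * S ^ m := hinj eq3
    rw [hφS, hSP] at eq4
    have hexp : (q - 1) * m + m = q * m := by
      have h1 : q - 1 + 1 = q := by omega
      calc (q - 1) * m + m = (q - 1 + 1) * m := by rw [add_mul, one_mul]
        _ = q * m := by rw [h1]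
    have eq5 : φ F = (MvPowerSeries.X β : MvPowerSeries Δ k) ^ ((q - 1) * m) * F := by
      have e6 : F * MvPowerSeries.X β ^ (q * m) = φ F * MvPowerSeries.X β ^ m := by
        apply mul_right_cancel₀ (pow_ne_zero m hPne)
        calc F * MvPowerSeries.X β ^ (q * m) * P ^ m
            = F * (MvPowerSeries.X β ^ q * P) ^ m := by
              rw [mul_pow, ← pow_mul]; ring
          _ = φ F * (MvPowerSeries.X β * P) ^ m := eq4
          _ = φ F * MvPowerSeries.X β ^ m * P ^ m := by rw [mul_pow]; ring
      apply mul_right_cancel₀ (pow_ne_zero m hXne)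
      rw [← e6, ← hexp, pow_add]
      ring
    obtain ⟨G, hG1, hG2⟩ := aux_core β q φ hq hφ1 hφ2 m F eq5
    refine ⟨G, m, hG1, ?_⟩
    apply (hXunit.pow m).mul_right_cancel
    calc g * ρ (P ^ m) * ρ (MvPowerSeries.X β) ^ m
        = g * ρ (S ^ m) := by
          rw [mul_assoc, ← map_pow, ← map_mul, ← mul_pow,
            mul_comm P (MvPowerSeries.X β), ← hSP]
      _ = ρ F := eq1
      _ = ρ G * ρ (MvPowerSeries.X β) ^ m := by
          rw [hG2, map_mul, map_pow]; ring
  · rintro ⟨G, n, hG1, hG2⟩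
    have hGfix : φ G = G := aux_fix β q φ hq hφ1 hφ2 G hG1
    have h1 := congrArg φ' hG2
    rw [map_mul, hφ', hφ', map_pow, hφP, hGfix] at h1
    have h2 : φ' g * ρ (P ^ n) = g * ρ (P ^ n) := h1.trans hG2.symm
    have hu : IsUnit (ρ (P ^ n)) := by rw [map_pow]; exact hPunit.pow n
    exact hu.mul_right_cancel h2

/-- Let `k = 𝔽_q` (`q = p ^ f`), let `E_Δ` be the localization of
`k[[X_α : α ∈ Δ]]` at the powers of `X_Δ = ∏_α X_α`, and let `φ_β` be the `k`-algebra
endomorphism substituting `X_β ^ q` for `X_β` (characterized below on coefficients: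
`hφ1`/`hφ2` say exactly that `φ` sends `∑ a_e X^e` to `∑ a_e X^{e'}` with
`e' = e` away from `β` and `e'(β) = q·e(β)`), with induced endomorphism `φ'` of `E_Δ`.
Then an element `g ∈ E_Δ` is fixed by `φ'` if and only if `g` lies in the image of the
canonical map `E_{Δ∖{β}} → E_Δ`, i.e. iff `g = G / (∏_{α ≠ β} X_α)^n` for some `n` and some
power series `G` not involving the variable `X_β`. -/
theorem statement4 (p f : ℕ) [Fact p.Prime] (hf : 1 ≤ f)
    (k : Type*) [Field k] [Fintype k] (hk : Fintype.card k = p ^ f)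
    (Δ : Type*) [Fintype Δ] [DecidableEq Δ] (β : Δ)
    (φ : MvPowerSeries Δ k →+* MvPowerSeries Δ k)
    (hφ1 : ∀ (F : MvPowerSeries Δ k) (e : Δ →₀ ℕ),
      MvPowerSeries.coeff (R := k) (Finsupp.update e β (p ^ f * e β)) (φ F) =
        MvPowerSeries.coeff (R := k) e F)
    (hφ2 : ∀ (F : MvPowerSeries Δ k) (e : Δ →₀ ℕ),
      ¬ p ^ f ∣ e β → MvPowerSeries.coeff (R := k) e (φ F) = 0)
    (φ' : Localization.Away (∏ α : Δ, (MvPowerSeries.X α : MvPowerSeries Δ k)) →+*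
          Localization.Away (∏ α : Δ, (MvPowerSeries.X α : MvPowerSeries Δ k)))
    (hφ' : ∀ F : MvPowerSeries Δ k,
      φ' (algebraMap (MvPowerSeries Δ k)
            (Localization.Away (∏ α : Δ, (MvPowerSeries.X α : MvPowerSeries Δ k))) F) =
        algebraMap (MvPowerSeries Δ k)
            (Localization.Away (∏ α : Δ, (MvPowerSeries.X α : MvPowerSeries Δ k))) (φ F))
    (g : Localization.Away (∏ α : Δ, (MvPowerSeries.X α : MvPowerSeries Δ k))) :
    φ' g = g ↔
      ∃ (G : MvPowerSeries Δ k) (n : ℕ),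
        (∀ e : Δ →₀ ℕ, e β ≠ 0 → MvPowerSeries.coeff (R := k) e G = 0) ∧
        g * algebraMap (MvPowerSeries Δ k)
              (Localization.Away (∏ α : Δ, (MvPowerSeries.X α : MvPowerSeries Δ k)))
              ((∏ α ∈ Finset.univ.erase β, (MvPowerSeries.X α : MvPowerSeries Δ k)) ^ n) =
          algebraMap (MvPowerSeries Δ k)
              (Localization.Away (∏ α : Δ, (MvPowerSeries.X α : MvPowerSeries Δ k))) G := by
  have hq : 2 ≤ p ^ f := by
    have hp : 2 ≤ p := (Fact.out (p := p.Prime)).two_le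
    calc 2 ≤ p := hp
      _ ≤ p ^ f := Nat.le_self_pow (by omega) p
  exact aux_main β (p ^ f) hq φ hφ1 hφ2 _ rfl φ' hφ' g
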